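/- For each p ∈ (1,∞) there exists a constant c ≥ 1 depending only on p such that for all P, Q ∈ ℝⁿ: c^{−1} |V(P) − V(Q)|² ≤ (A(P) − A(Q)) · (P − Q) ≤ c |V(P) − V(Q)|², and moreover c^{−1} φ_{|Q|}(|P − Q|) ≤ (A(P) − A(Q)) · (P − Q) ≤ c φ_{|Q|}(|P − Q|). -/

import Mathlib

open MeasureTheory

/-- `A(ξ) := |ξ|^{p-2} ξ` (with `A(0) = 0`). -/
noncomputable def Aop (p : ℝ) {n : ℕ} (ξ : EuclideanSpace ℝ (Fin n)) :
    EuclideanSpace ℝ (Fin n) :=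
  ‖ξ‖ ^ (p - 2) • ξ

/-- `V(ξ) := |ξ|^{(p-2)/2} ξ` (with `V(0) = 0`). -/
noncomputable def Vop (p : ℝ) {n : ℕ} (ξ : EuclideanSpace ℝ (Fin n)) :
    EuclideanSpace ℝ (Fin n) :=
  ‖ξ‖ ^ ((p - 2) / 2) • ξ

/-- The shifted N-function `φ_a(t) := ∫₀ᵗ (max a s)^{p-2} s ds`. -/
noncomputable def phiShift (p a t : ℝ) : ℝ :=
  ∫ s in (0 : ℝ)..t, max a s ^ (p - 2) * s

namespace S10
open Real

lemma tangent_ge {r : ℝ} (hr : 1 ≤ r) {x : ℝ} (hx : 1 ≤ x) :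
    x ^ r - 1 ≤ r * x ^ (r - 1) * (x - 1) := by
  have hx0 : (0:ℝ) < x := lt_of_lt_of_le one_pos hx
  have hs : (-1:ℝ) ≤ x⁻¹ - 1 := by
    have : (0:ℝ) < x⁻¹ := inv_pos.2 hx0
    linarith
  have hb := one_add_mul_self_le_rpow_one_add hs hr
  have he : (1 + (x⁻¹ - 1)) = x⁻¹ := by ring
  rw [he, Real.inv_rpow hx0.le] at hb
  have hA : (0:ℝ) < x ^ r := Real.rpow_pos_of_pos hx0 r
  have hBx : x ^ (r-1) * x = x ^ r := by
    rw [← Real.rpow_add_one hx0.ne']; ring_nf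
  have key : x ^ r * x + r * x ^ r - r * (x ^ r * x) ≤ x := by
    calc x ^ r * x + r * x ^ r - r * (x ^ r * x)
        = (1 + r * (x⁻¹ - 1)) * (x ^ r * x) := by field_simp; ring
      _ ≤ (x ^ r)⁻¹ * (x ^ r * x) := by
          apply mul_le_mul_of_nonneg_right hb; positivity
      _ = x := by field_simp
  have goalx : (x ^ r - 1) * x ≤ (r * x ^ (r-1) * (x-1)) * x := by
    have h5 : r * x ^ (r-1) * (x-1) * x = r * (x ^ r * x) - r * x ^ r := by
      rw [← hBx]; ring
    rw [h5]; nlinarith [key]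
  exact le_of_mul_le_mul_right goalx hx0

lemma tangent_le {r : ℝ} (hr0 : 0 ≤ r) (hr : r ≤ 1) {x : ℝ} (hx : 1 ≤ x) :
    r * x ^ (r - 1) * (x - 1) ≤ x ^ r - 1 := by
  have hx0 : (0:ℝ) < x := lt_of_lt_of_le one_pos hx
  have hs : (-1:ℝ) ≤ x⁻¹ - 1 := by
    have : (0:ℝ) < x⁻¹ := inv_pos.2 hx0
    linarith
  have hb := rpow_one_add_le_one_add_mul_self hs hr0 hr
  have he : (1 + (x⁻¹ - 1)) = x⁻¹ := by ring
  rw [he, Real.inv_rpow hx0.le] at hb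
  have hA : (0:ℝ) < x ^ r := Real.rpow_pos_of_pos hx0 r
  have hBx : x ^ (r-1) * x = x ^ r := by
    rw [← Real.rpow_add_one hx0.ne']; ring_nf
  have key : x ≤ x ^ r * x + r * x ^ r - r * (x ^ r * x) := by
    calc x = (x ^ r)⁻¹ * (x ^ r * x) := by field_simp
      _ ≤ (1 + r * (x⁻¹ - 1)) * (x ^ r * x) := by
          apply mul_le_mul_of_nonneg_right hb; positivity
      _ = x ^ r * x + r * x ^ r - r * (x ^ r * x) := by field_simp; ring
  have goalx : (r * x ^ (r-1) * (x-1)) * x ≤ (x ^ r - 1) * x := by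
    have h5 : r * x ^ (r-1) * (x-1) * x = r * (x ^ r * x) - r * x ^ r := by
      rw [← hBx]; ring
    rw [h5]; nlinarith [key]
  exact le_of_mul_le_mul_right goalx hx0


noncomputable def kap (r : ℝ) : ℝ := max (max r r⁻¹) (2 ^ |r - 1|)

lemma kap_ge_one {r : ℝ} (hr : 0 < r) : 1 ≤ kap r := by
  rcases le_total 1 r with h | h
  · exact le_trans (le_trans h (le_max_left _ _)) (le_max_left _ _)
  · have : 1 ≤ r⁻¹ := one_le_inv_iff₀.2 ⟨hr, h⟩
    exact le_trans (le_trans this (le_max_right _ _)) (le_max_left _ _)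

lemma kap_pos {r : ℝ} (hr : 0 < r) : 0 < kap r := lt_of_lt_of_le one_pos (kap_ge_one hr)

lemma two_pow_abs_le_kap (r : ℝ) : (2:ℝ) ^ |r - 1| ≤ kap r := le_max_right _ _

-- x-version of the master comparison
lemma comp_x {r : ℝ} (hr : 0 < r) {x : ℝ} (hx : 1 ≤ x) :
    (kap r)⁻¹ * ((x+1) ^ (r-1) * (x-1)) ≤ x ^ r - 1 ∧
      x ^ r - 1 ≤ kap r * ((x+1) ^ (r-1) * (x-1)) := by
  have hx0 : (0:ℝ) < x := lt_of_lt_of_le one_pos hx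
  have hx1 : (0:ℝ) < x + 1 := by linarith
  have hk1 := kap_ge_one hr
  have hk0 := kap_pos hr
  have hL0 : 0 ≤ (x+1) ^ (r-1) * (x-1) := by
    have := Real.rpow_nonneg hx1.le (r-1)
    nlinarith
  rcases le_total 1 r with h1r | hr1
  · -- r ≥ 1
    have habs : |r - 1| = r - 1 := abs_of_nonneg (by linarith)
    constructor
    · -- (x+1)^{r-1}(x-1) ≤ 2^{r-1} (x^r - 1)
      have e1 : (x+1:ℝ) ^ (r-1) ≤ (2*x) ^ (r-1) :=
        Real.rpow_le_rpow hx1.le (by linarith) (by linarith)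
      have e2 : ((2:ℝ)*x) ^ (r-1) = 2 ^ (r-1) * x ^ (r-1) :=
        Real.mul_rpow (by norm_num) hx0.le
      have e3 : x ^ (r-1) * (x - 1) ≤ x ^ r - 1 := by
        have hBx : x ^ (r-1) * x = x ^ r := by
          rw [← Real.rpow_add_one hx0.ne']; ring_nf
        have hone : (1:ℝ) ≤ x ^ (r-1) := Real.one_le_rpow hx (by linarith)
        nlinarith
      have e4 : (x+1) ^ (r-1) * (x-1) ≤ 2 ^ (r-1) * (x ^ r - 1) := by
        calc (x+1) ^ (r-1) * (x-1) ≤ (2*x) ^ (r-1) * (x-1) := by nlinarith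
          _ = 2 ^ (r-1) * (x ^ (r-1) * (x-1)) := by rw [e2]; ring
          _ ≤ 2 ^ (r-1) * (x ^ r - 1) := by
              have : (0:ℝ) < (2:ℝ) ^ (r-1) := Real.rpow_pos_of_pos (by norm_num) _
              nlinarith
      have hkk : (2:ℝ) ^ (r-1) ≤ kap r := by rw [← habs]; exact two_pow_abs_le_kap r
      have h2p : (0:ℝ) < (2:ℝ) ^ (r-1) := Real.rpow_pos_of_pos (by norm_num) _
      rw [inv_mul_le_iff₀ hk0]
      calc (x+1) ^ (r-1) * (x-1) ≤ 2 ^ (r-1) * (x ^ r - 1) := e4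
        _ ≤ kap r * (x ^ r - 1) := by
            have hxr1 : 0 ≤ x ^ r - 1 := by
              have : (1:ℝ) ≤ x ^ r := Real.one_le_rpow hx hr.le
              linarith
            nlinarith
    · have e1 := tangent_ge h1r hx
      have e2 : x ^ (r-1) ≤ (x+1) ^ (r-1) :=
        Real.rpow_le_rpow hx0.le (by linarith) (by linarith)
      have hrk : r ≤ kap r := le_trans (le_max_left _ _) (le_max_left _ _)
      calc x ^ r - 1 ≤ r * x ^ (r-1) * (x-1) := e1
        _ ≤ r * ((x+1) ^ (r-1) * (x-1)) := by
            have := mul_le_mul_of_nonneg_right e2 (show (0:ℝ) ≤ x - 1 by linarith)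
            nlinarith
        _ ≤ kap r * ((x+1) ^ (r-1) * (x-1)) := by nlinarith
  · -- r ≤ 1
    have habs : |r - 1| = 1 - r := by rw [abs_of_nonpos (by linarith)]; ring
    constructor
    · -- lower: r (x+1)^{r-1}(x-1) ≤ x^r - 1
      have e1 := tangent_le hr.le hr1 hx
      have e2 : (x+1) ^ (r-1) ≤ x ^ (r-1) :=
        Real.rpow_le_rpow_of_nonpos hx0 (by linarith) (by linarith)
      have hik : (kap r)⁻¹ ≤ r := by
        have : r⁻¹ ≤ kap r := le_trans (le_max_right _ _) (le_max_left _ _)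
        rw [inv_le_comm₀ hk0 hr]
        exact this
      calc (kap r)⁻¹ * ((x+1) ^ (r-1) * (x-1)) ≤ r * ((x+1) ^ (r-1) * (x-1)) := by nlinarith
        _ ≤ r * (x ^ (r-1) * (x-1)) := by
            have := mul_le_mul_of_nonneg_right e2 (show (0:ℝ) ≤ x - 1 by linarith)
            nlinarith
        _ ≤ x ^ r - 1 := by nlinarith
    · -- upper: x^r - 1 ≤ x^{r-1}(x-1) ≤ 2^{1-r} (x+1)^{r-1} (x-1)
      have hBx : x ^ (r-1) * x = x ^ r := by
        rw [← Real.rpow_add_one hx0.ne']; ring_nf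
      have hone : x ^ (r-1) ≤ 1 := by
        calc x ^ (r-1) ≤ x ^ (0:ℝ) := Real.rpow_le_rpow_of_exponent_le hx (by linarith)
          _ = 1 := Real.rpow_zero x
      have e3 : x ^ r - 1 ≤ x ^ (r-1) * (x - 1) := by nlinarith
      have e2 : x ^ (r-1) ≤ ((x+1)/2) ^ (r-1) := by
        apply Real.rpow_le_rpow_of_nonpos (by linarith) (by linarith) (by linarith)
      have e4 : ((x+1)/2) ^ (r-1) = (x+1) ^ (r-1) / 2 ^ (r-1) :=
        Real.div_rpow hx1.le (by norm_num) _
      have h2p : (0:ℝ) < (2:ℝ) ^ (r-1) := Real.rpow_pos_of_pos (by norm_num) _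
      have e5 : (x+1) ^ (r-1) / 2 ^ (r-1) = 2 ^ (1-r) * (x+1) ^ (r-1) := by
        rw [div_eq_iff h2p.ne', mul_assoc, mul_comm ((x+1)^(r-1)) _, ← mul_assoc,
          ← Real.rpow_add (by norm_num : (0:ℝ) < 2)]
        norm_num
      have hkk : (2:ℝ) ^ (1-r) ≤ kap r := by rw [← habs]; exact two_pow_abs_le_kap r
      calc x ^ r - 1 ≤ x ^ (r-1) * (x-1) := e3
        _ ≤ (2 ^ (1-r) * (x+1) ^ (r-1)) * (x-1) := by
            rw [← e5, ← e4]; nlinarith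
        _ ≤ kap r * ((x+1) ^ (r-1) * (x-1)) := by nlinarith


lemma hmul {x : ℝ} (hx : 0 ≤ x) {y : ℝ} (hy : y + 1 ≠ 0) : x ^ y * x = x ^ (y+1) := by
  rcases hx.eq_or_lt with rfl | hx0
  · rw [mul_zero, Real.zero_rpow hy]
  · rw [Real.rpow_add_one hx0.ne']

lemma sq_rpow {x : ℝ} (hx : 0 ≤ x) (y : ℝ) : (x ^ y) ^ 2 = x ^ (2*y) := by
  rw [← Real.rpow_natCast (x ^ y) 2, ← Real.rpow_mul hx]
  norm_num [mul_comm]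

lemma comp_h {r : ℝ} (hr : 0 < r) {a b : ℝ} (hb : 0 ≤ b) (hab : b ≤ a) :
    (kap r)⁻¹ * ((a+b) ^ (r-1) * (a-b)) ≤ a ^ r - b ^ r ∧
      a ^ r - b ^ r ≤ kap r * ((a+b) ^ (r-1) * (a-b)) := by
  have ha : 0 ≤ a := le_trans hb hab
  have hk1 := kap_ge_one hr
  have hk0 := kap_pos hr
  rcases hb.eq_or_lt with rfl | hb0
  · have h1 : a ^ r - (0:ℝ) ^ r = a ^ r := by rw [Real.zero_rpow hr.ne']; ring
    have h2 : (a+0) ^ (r-1) * (a-0) = a ^ r := by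
      rw [add_zero, sub_zero, hmul ha (by rw [show r - 1 + 1 = r by ring]; exact hr.ne'),
        show r - 1 + 1 = r by ring]
    rw [h1, h2]
    have hra : 0 ≤ a ^ r := Real.rpow_nonneg ha r
    constructor
    · rw [inv_mul_le_iff₀ hk0]; nlinarith
    · nlinarith
  · have ha0 : 0 < a := lt_of_lt_of_le hb0 hab
    set x := a / b with hxdef
    have hx : 1 ≤ x := (one_le_div hb0).2 hab
    have hbx : b * x = a := mul_div_cancel₀ a hb0.ne' 
    obtain ⟨l, u⟩ := comp_x hr hx
    have hbr : (0:ℝ) < b ^ r := Real.rpow_pos_of_pos hb0 r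
    have I1 : b ^ r * (x ^ r - 1) = a ^ r - b ^ r := by
      rw [mul_sub, ← Real.mul_rpow hb0.le (by positivity : (0:ℝ) ≤ x), hbx, mul_one]
    have I2 : b ^ r * ((x+1) ^ (r-1) * (x-1)) = (a+b) ^ (r-1) * (a-b) := by
      have e1 : b ^ r = b ^ (r-1) * b := by
        rw [hmul hb0.le (by rw [show r - 1 + 1 = r by ring]; exact hr.ne'),
          show r - 1 + 1 = r by ring]
      have e2 : b ^ (r-1) * (x+1) ^ (r-1) = (a+b) ^ (r-1) := by
        rw [← Real.mul_rpow hb0.le (by positivity : (0:ℝ) ≤ x + 1), mul_add, hbx, mul_one]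
      have e3 : b * (x - 1) = a - b := by rw [mul_sub, hbx, mul_one]
      calc b ^ r * ((x+1) ^ (r-1) * (x-1)) 
          = (b ^ (r-1) * (x+1) ^ (r-1)) * (b * (x-1)) := by rw [e1]; ring
        _ = (a+b) ^ (r-1) * (a-b) := by rw [e2, e3]
    constructor
    · calc (kap r)⁻¹ * ((a+b) ^ (r-1) * (a-b)) 
          = b ^ r * ((kap r)⁻¹ * ((x+1) ^ (r-1) * (x-1))) := by rw [← I2]; ring
        _ ≤ b ^ r * (x ^ r - 1) := mul_le_mul_of_nonneg_left l hbr.le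
        _ = a ^ r - b ^ r := I1
    · calc a ^ r - b ^ r = b ^ r * (x ^ r - 1) := I1.symm
        _ ≤ b ^ r * (kap r * ((x+1) ^ (r-1) * (x-1))) := mul_le_mul_of_nonneg_left u hbr.le
        _ = kap r * ((a+b) ^ (r-1) * (a-b)) := by rw [← I2]; ring


lemma interp {A B t s : ℝ} (ht : |t| ≤ s) (h1 : A + B * s ≤ 0) (h2 : A - B * s ≤ 0) :
    A + B * t ≤ 0 := by
  obtain ⟨h3, h4⟩ := abs_le.1 ht
  rcases le_total 0 B with hB | hB
  · nlinarith
  · nlinarith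

lemma ratio (r : ℝ) {x y : ℝ} (hx : 0 ≤ x) (hxy : x ≤ 2*y) (hyx : y ≤ 2*x) :
    x ^ r ≤ 2 ^ |r| * y ^ r := by
  have h2r : (1:ℝ) ≤ 2 ^ |r| := by
    calc (1:ℝ) = 2 ^ (0:ℝ) := by norm_num
      _ ≤ 2 ^ |r| := Real.rpow_le_rpow_of_exponent_le (by norm_num) (abs_nonneg r)
  rcases hx.eq_or_lt with rfl | hx0
  · have hy : y = 0 := le_antisymm (by linarith) (by linarith)
    subst hy
    nlinarith [Real.rpow_nonneg (le_refl (0:ℝ)) r]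
  · have hy0 : (0:ℝ) < y := by linarith
    rcases le_total 0 r with hr | hr
    · have h1 : x ^ r ≤ (2*y) ^ r := Real.rpow_le_rpow hx hxy hr
      rw [Real.mul_rpow (by norm_num) hy0.le] at h1
      calc x ^ r ≤ 2 ^ r * y ^ r := h1
        _ ≤ 2 ^ |r| * y ^ r := by
            have := Real.rpow_le_rpow_of_exponent_le (show (1:ℝ) ≤ 2 by norm_num) (le_abs_self r)
            nlinarith [Real.rpow_nonneg hy0.le r]
    · have h1 : x ^ r ≤ (y/2) ^ r :=
        Real.rpow_le_rpow_of_nonpos (by linarith) (by linarith) hr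
      have h2 : (y/2) ^ r = y ^ r / 2 ^ r := Real.div_rpow hy0.le (by norm_num) r
      have h3 : y ^ r / 2 ^ r = 2 ^ (-r) * y ^ r := by
        rw [Real.rpow_neg (by norm_num : (0:ℝ) ≤ 2)]
        ring
      have h4 : |r| = -r := abs_of_nonpos hr
      calc x ^ r ≤ 2 ^ (-r) * y ^ r := by rw [← h3, ← h2]; exact h1
        _ = 2 ^ |r| * y ^ r := by rw [h4]

lemma sum_comp {r : ℝ} (hr : 0 < r) {a b : ℝ} (ha : 0 ≤ a) (hb : 0 ≤ b) :
    a ^ r + b ^ r ≤ 2 * (a+b) ^ r ∧ (a+b) ^ r ≤ 2 ^ r * (a ^ r + b ^ r) := by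
  have key : ∀ u v : ℝ, 0 ≤ u → u ≤ v → (u+v) ^ r ≤ 2 ^ r * (u ^ r + v ^ r) := by
    intro u v hu huv
    have hv : 0 ≤ v := le_trans hu huv
    calc (u+v) ^ r ≤ (2*v) ^ r := Real.rpow_le_rpow (by linarith) (by linarith) hr.le
      _ = 2 ^ r * v ^ r := Real.mul_rpow (by norm_num) hv
      _ ≤ 2 ^ r * (u ^ r + v ^ r) := by
          have h2 : (0:ℝ) < 2 ^ r := Real.rpow_pos_of_pos (by norm_num) r
          nlinarith [Real.rpow_nonneg hu r]
  constructor
  · have h1 : a ^ r ≤ (a+b) ^ r := Real.rpow_le_rpow ha (by linarith) hr.le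
    have h2 : b ^ r ≤ (a+b) ^ r := Real.rpow_le_rpow hb (by linarith) hr.le
    linarith
  · rcases le_total a b with h | h
    · exact key a b ha h
    · have := key b a hb h
      rw [add_comm b a] at this
      linarith


/-- endpoint comparison for F at t = ab -/
lemma corA {p : ℝ} (hp : 1 < p) {a b : ℝ} (ha : 0 ≤ a) (hb : 0 ≤ b) :
    (kap (p-1))⁻¹ * ((a+b) ^ (p-2) * (a-b)^2) ≤ (a-b) * (a ^ (p-1) - b ^ (p-1)) ∧
      (a-b) * (a ^ (p-1) - b ^ (p-1)) ≤ kap (p-1) * ((a+b) ^ (p-2) * (a-b)^2) := by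
  have hr : 0 < p - 1 := by linarith
  have key : ∀ u v : ℝ, 0 ≤ v → v ≤ u →
      (kap (p-1))⁻¹ * ((u+v) ^ (p-2) * (u-v)^2) ≤ (u-v) * (u ^ (p-1) - v ^ (p-1)) ∧
      (u-v) * (u ^ (p-1) - v ^ (p-1)) ≤ kap (p-1) * ((u+v) ^ (p-2) * (u-v)^2) := by
    intro u v hv hvu
    obtain ⟨l, u'⟩ := comp_h hr hv hvu
    rw [show p - 1 - 1 = p - 2 by ring] at l u'
    have huv : 0 ≤ u - v := by linarith
    constructor
    · have := mul_le_mul_of_nonneg_left l huv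
      calc (kap (p-1))⁻¹ * ((u+v) ^ (p-2) * (u-v)^2)
          = (u-v) * ((kap (p-1))⁻¹ * ((u+v) ^ (p-2) * (u-v))) := by ring
        _ ≤ (u-v) * (u ^ (p-1) - v ^ (p-1)) := mul_le_mul_of_nonneg_left l huv
    · calc (u-v) * (u ^ (p-1) - v ^ (p-1))
          ≤ (u-v) * (kap (p-1) * ((u+v) ^ (p-2) * (u-v))) := mul_le_mul_of_nonneg_left u' huv
        _ = kap (p-1) * ((u+v) ^ (p-2) * (u-v)^2) := by ring
  rcases le_total b a with h | h
  · exact key a b hb h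
  · obtain ⟨l, u'⟩ := key b a ha h
    constructor
    · calc (kap (p-1))⁻¹ * ((a+b) ^ (p-2) * (a-b)^2)
          = (kap (p-1))⁻¹ * ((b+a) ^ (p-2) * (b-a)^2) := by rw [add_comm a b]; ring_nf
        _ ≤ (b-a) * (b ^ (p-1) - a ^ (p-1)) := l
        _ = (a-b) * (a ^ (p-1) - b ^ (p-1)) := by ring
    · calc (a-b) * (a ^ (p-1) - b ^ (p-1)) = (b-a) * (b ^ (p-1) - a ^ (p-1)) := by ring
        _ ≤ kap (p-1) * ((b+a) ^ (p-2) * (b-a)^2) := u'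
        _ = kap (p-1) * ((a+b) ^ (p-2) * (a-b)^2) := by rw [add_comm b a]; ring_nf

/-- endpoint comparison for G at t = ab -/
lemma corB {p : ℝ} (hp : 1 < p) {a b : ℝ} (ha : 0 ≤ a) (hb : 0 ≤ b) :
    ((kap (p/2))^2)⁻¹ * ((a+b) ^ (p-2) * (a-b)^2) ≤ (a ^ (p/2) - b ^ (p/2))^2 ∧
      (a ^ (p/2) - b ^ (p/2))^2 ≤ (kap (p/2))^2 * ((a+b) ^ (p-2) * (a-b)^2) := by
  have hr : 0 < p/2 := by linarith
  have hk0 := kap_pos hr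
  have key : ∀ u v : ℝ, 0 ≤ v → v ≤ u →
      ((kap (p/2))^2)⁻¹ * ((u+v) ^ (p-2) * (u-v)^2) ≤ (u ^ (p/2) - v ^ (p/2))^2 ∧
      (u ^ (p/2) - v ^ (p/2))^2 ≤ (kap (p/2))^2 * ((u+v) ^ (p-2) * (u-v)^2) := by
    intro u v hv hvu
    have hu : 0 ≤ u := le_trans hv hvu
    obtain ⟨l, u'⟩ := comp_h hr hv hvu
    have hD : 0 ≤ u ^ (p/2) - v ^ (p/2) := by
      have := Real.rpow_le_rpow hv hvu hr.le
      linarith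
    have hN : 0 ≤ (u+v) ^ (p/2-1) * (u-v) := by
      have h1 : (0:ℝ) ≤ (u+v) ^ (p/2-1) := Real.rpow_nonneg (by linarith) _
      nlinarith
    have hNN : ((u+v) ^ (p/2-1) * (u-v))^2 = (u+v) ^ (p-2) * (u-v)^2 := by
      have := sq_rpow (show (0:ℝ) ≤ u + v by linarith) (p/2-1)
      rw [mul_pow, this, show 2*(p/2-1) = p-2 by ring]
    have hl0 : 0 ≤ (kap (p/2))⁻¹ * ((u+v) ^ (p/2-1) * (u-v)) := by positivity
    constructor
    · have hsq : ((kap (p/2))⁻¹ * ((u+v) ^ (p/2-1) * (u-v)))^2 ≤ (u ^ (p/2) - v ^ (p/2))^2 :=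
        pow_le_pow_left₀ hl0 l 2
      calc ((kap (p/2))^2)⁻¹ * ((u+v) ^ (p-2) * (u-v)^2)
          = ((kap (p/2))⁻¹ * ((u+v) ^ (p/2-1) * (u-v)))^2 := by
            rw [mul_pow, hNN, inv_pow]
        _ ≤ (u ^ (p/2) - v ^ (p/2))^2 := hsq
    · have hsq : (u ^ (p/2) - v ^ (p/2))^2 ≤ (kap (p/2) * ((u+v) ^ (p/2-1) * (u-v)))^2 :=
        pow_le_pow_left₀ hD u' 2
      calc (u ^ (p/2) - v ^ (p/2))^2 ≤ (kap (p/2) * ((u+v) ^ (p/2-1) * (u-v)))^2 := hsq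
        _ = (kap (p/2))^2 * ((u+v) ^ (p-2) * (u-v)^2) := by rw [mul_pow, hNN]
  rcases le_total b a with h | h
  · exact key a b hb h
  · obtain ⟨l, u'⟩ := key b a ha h
    constructor
    · calc ((kap (p/2))^2)⁻¹ * ((a+b) ^ (p-2) * (a-b)^2)
          = ((kap (p/2))^2)⁻¹ * ((b+a) ^ (p-2) * (b-a)^2) := by rw [add_comm a b]; ring_nf
        _ ≤ (b ^ (p/2) - a ^ (p/2))^2 := l
        _ = (a ^ (p/2) - b ^ (p/2))^2 := by ring
    · calc (a ^ (p/2) - b ^ (p/2))^2 = (b ^ (p/2) - a ^ (p/2))^2 := by ring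
        _ ≤ (kap (p/2))^2 * ((b+a) ^ (p-2) * (b-a)^2) := u'
        _ = (kap (p/2))^2 * ((a+b) ^ (p-2) * (a-b)^2) := by rw [add_comm b a]; ring_nf


/-- endpoint comparison for F at t = -ab -/
lemma corC1 {p : ℝ} (hp : 1 < p) {a b : ℝ} (ha : 0 ≤ a) (hb : 0 ≤ b) :
    (max 2 (2 ^ (p-1)))⁻¹ * (a+b) ^ p ≤ (a+b) * (a ^ (p-1) + b ^ (p-1)) ∧
      (a+b) * (a ^ (p-1) + b ^ (p-1)) ≤ max 2 (2 ^ (p-1)) * (a+b) ^ p := by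
  have hr : 0 < p - 1 := by linarith
  have hab : 0 ≤ a + b := by linarith
  have hM2 : (2:ℝ) ≤ max 2 (2 ^ (p-1)) := le_max_left _ _
  have h2p : (0:ℝ) < 2 ^ (p-1) := Real.rpow_pos_of_pos (by norm_num) _
  have hM0 : (0:ℝ) < max 2 (2 ^ (p-1)) := by positivity
  obtain ⟨s1, s2⟩ := sum_comp hr ha hb
  have hE : (a+b) ^ (p-1) * (a+b) = (a+b) ^ p := by
    rw [hmul hab (by rw [show p - 1 + 1 = p by ring]; positivity), show p - 1 + 1 = p by ring]
  constructor
  · rw [inv_mul_le_iff₀ hM0]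
    have h1 : (a+b) ^ p ≤ 2 ^ (p-1) * ((a ^ (p-1) + b ^ (p-1)) * (a+b)) := by
      calc (a+b) ^ p = (a+b) ^ (p-1) * (a+b) := hE.symm
        _ ≤ (2 ^ (p-1) * (a ^ (p-1) + b ^ (p-1))) * (a+b) := mul_le_mul_of_nonneg_right s2 hab
        _ = 2 ^ (p-1) * ((a ^ (p-1) + b ^ (p-1)) * (a+b)) := by ring
    have hS0 : 0 ≤ (a ^ (p-1) + b ^ (p-1)) * (a+b) := by
      have := Real.rpow_nonneg ha (p-1); have := Real.rpow_nonneg hb (p-1); nlinarith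
    have hM : (2:ℝ) ^ (p-1) ≤ max 2 (2 ^ (p-1)) := le_max_right _ _
    nlinarith
  · have h1 : (a ^ (p-1) + b ^ (p-1)) * (a+b) ≤ 2 * (a+b) ^ p := by
      calc (a ^ (p-1) + b ^ (p-1)) * (a+b) ≤ (2 * (a+b) ^ (p-1)) * (a+b) :=
            mul_le_mul_of_nonneg_right s1 hab
        _ = 2 * (a+b) ^ p := by rw [mul_assoc, hE]
    have hP0 : 0 ≤ (a+b) ^ p := Real.rpow_nonneg hab p
    nlinarith

/-- endpoint comparison for G at t = -ab -/
lemma corC2 {p : ℝ} (hp : 1 < p) {a b : ℝ} (ha : 0 ≤ a) (hb : 0 ≤ b) :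
    (max 4 (2 ^ p))⁻¹ * (a+b) ^ p ≤ (a ^ (p/2) + b ^ (p/2))^2 ∧
      (a ^ (p/2) + b ^ (p/2))^2 ≤ max 4 (2 ^ p) * (a+b) ^ p := by
  have hr : 0 < p/2 := by linarith
  have hab : 0 ≤ a + b := by linarith
  have h2p : (0:ℝ) < 2 ^ (p/2) := Real.rpow_pos_of_pos (by norm_num) _
  have hM0 : (0:ℝ) < max 4 (2 ^ p) := by positivity
  obtain ⟨s1, s2⟩ := sum_comp hr ha hb
  have hT0 : 0 ≤ a ^ (p/2) + b ^ (p/2) := by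
    have := Real.rpow_nonneg ha (p/2); have := Real.rpow_nonneg hb (p/2); linarith
  have hABh : 0 ≤ (a+b) ^ (p/2) := Real.rpow_nonneg hab _
  have hE : ((a+b) ^ (p/2))^2 = (a+b) ^ p := by
    rw [sq_rpow hab, show 2*(p/2) = p by ring]
  have hE2 : ((2:ℝ) ^ (p/2))^2 = 2 ^ p := by
    rw [sq_rpow (by norm_num : (0:ℝ) ≤ 2), show 2*(p/2) = p by ring]
  constructor
  · rw [inv_mul_le_iff₀ hM0]
    have h1 : (a+b) ^ p ≤ 2 ^ p * (a ^ (p/2) + b ^ (p/2))^2 := by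
      have hsq : ((a+b) ^ (p/2))^2 ≤ (2 ^ (p/2) * (a ^ (p/2) + b ^ (p/2)))^2 :=
        pow_le_pow_left₀ hABh s2 2
      rw [hE, mul_pow, hE2] at hsq
      exact hsq
    have hM : (2:ℝ) ^ p ≤ max 4 (2 ^ p) := le_max_right _ _
    nlinarith [sq_nonneg (a ^ (p/2) + b ^ (p/2))]
  · have h1 : (a ^ (p/2) + b ^ (p/2))^2 ≤ 4 * (a+b) ^ p := by
      have hsq : (a ^ (p/2) + b ^ (p/2))^2 ≤ (2 * (a+b) ^ (p/2))^2 :=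
        pow_le_pow_left₀ hT0 s1 2
      rw [mul_pow, hE] at hsq
      nlinarith
    have hM : (4:ℝ) ≤ max 4 (2 ^ p) := le_max_left _ _
    nlinarith [Real.rpow_nonneg hab p]


lemma bump {x y c c' : ℝ} (h : x ≤ c*y) (hy : 0 ≤ y) (hcc : c ≤ c') : x ≤ c'*y := by nlinarith
lemma chain {x y z c1 c2 : ℝ} (h1 : x ≤ c1*y) (h2 : y ≤ c2*z) (hz : 0 ≤ z) (hc1 : 0 ≤ c1) :
    x ≤ (c1*c2)*z := by nlinarith
lemma uninv {c x y : ℝ} (hc : 0 < c) (h : c⁻¹*x ≤ y) : x ≤ c*y := by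
  rwa [inv_mul_le_iff₀ hc] at h

lemma prod4_bounds {w x y z : ℝ} (hw : 1 ≤ w) (hx : 1 ≤ x) (hy : 1 ≤ y) (hz : 1 ≤ z) :
    1 ≤ (w*x*y*z)^2 ∧ w ≤ (w*x*y*z)^2 ∧ x ≤ (w*x*y*z)^2 ∧ y ≤ (w*x*y*z)^2 ∧
    z ≤ (w*x*y*z)^2 ∧ w*x ≤ (w*x*y*z)^2 ∧ y*z ≤ (w*x*y*z)^2 := by
  have hxy : 1 ≤ x*y := by nlinarith
  have hyz : 1 ≤ y*z := by nlinarith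
  have hwx : 1 ≤ w*x := by nlinarith
  have hwxy : 1 ≤ w*x*y := by nlinarith
  have hprod : 1 ≤ w*x*y*z := by nlinarith
  have hsq : w*x*y*z ≤ (w*x*y*z)^2 := by nlinarith
  have hP : w*x ≤ w*x*y*z := by nlinarith
  have hyz0 : (0:ℝ) ≤ y*z := by nlinarith
  have hQ : y*z ≤ y*z*(w*x) := by nlinarith [mul_le_mul_of_nonneg_left hwx hyz0]
  refine ⟨by nlinarith, by nlinarith, by nlinarith, by nlinarith, by nlinarith,
    by nlinarith, by nlinarith⟩

lemma core_aux {p : ℝ} (hp : 1 < p) {κA κB κC1 κC2 : ℝ}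
    (hA1 : 1 ≤ κA) (hB1 : 1 ≤ κB) (hC11 : 1 ≤ κC1) (hC21 : 1 ≤ κC2)
    {a b t : ℝ} (ha : 0 ≤ a) (hb : 0 ≤ b) (ht : |t| ≤ a*b)
    (Al : κA⁻¹ * ((a+b)^(p-2) * (a-b)^2) ≤ (a-b)*(a^(p-1)-b^(p-1)))
    (Au : (a-b)*(a^(p-1)-b^(p-1)) ≤ κA * ((a+b)^(p-2)*(a-b)^2))
    (Bl : κB⁻¹ * ((a+b)^(p-2)*(a-b)^2) ≤ (a^(p/2)-b^(p/2))^2)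
    (Bu : (a^(p/2)-b^(p/2))^2 ≤ κB * ((a+b)^(p-2)*(a-b)^2))
    (C1l : κC1⁻¹ * (a+b)^p ≤ (a+b)*(a^(p-1)+b^(p-1)))
    (C1u : (a+b)*(a^(p-1)+b^(p-1)) ≤ κC1 * (a+b)^p)
    (C2l : κC2⁻¹ * (a+b)^p ≤ (a^(p/2)+b^(p/2))^2)
    (C2u : (a^(p/2)+b^(p/2))^2 ≤ κC2 * (a+b)^p) :
      (((κA*κB*κC1*κC2)^2)⁻¹ * (a^p + b^p - 2*(a^((p-2)/2) * b^((p-2)/2))*t) ≤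
          a^p + b^p - (a^(p-2) + b^(p-2))*t) ∧
      (a^p + b^p - (a^(p-2)+b^(p-2))*t ≤
          (κA*κB*κC1*κC2)^2 * (a^p + b^p - 2*(a^((p-2)/2)*b^((p-2)/2))*t)) ∧
      (((κA*κB*κC1*κC2)^2)⁻¹ * ((a+b)^(p-2)*(a^2+b^2-2*t)) ≤
          a^p + b^p - (a^(p-2)+b^(p-2))*t) ∧
      (a^p + b^p - (a^(p-2)+b^(p-2))*t ≤ (κA*κB*κC1*κC2)^2 * ((a+b)^(p-2)*(a^2+b^2-2*t))) := by
  have hp1 : 0 < p - 1 := by linarith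
  have hp2 : 0 < p/2 := by linarith
  obtain ⟨hc1, hAκ2, hBκ2, hC1κ2, hC2κ2, hABκ2, hCCκ2⟩ := prod4_bounds hA1 hB1 hC11 hC21
  set κ2 := (κA * κB * κC1 * κC2)^2 with hκ2def
  have hκA0 : (0:ℝ) < κA := by linarith
  have hκB0 : (0:ℝ) < κB := by linarith
  have hκC10 : (0:ℝ) < κC1 := by linarith
  have hκC20 : (0:ℝ) < κC2 := by linarith
  have hc0 : (0:ℝ) < κ2 := by linarith
  -- abbreviations
  set Fab := (a-b) * (a^(p-1) - b^(p-1)) with hFab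
  set Fmb := (a+b) * (a^(p-1) + b^(p-1)) with hFmb
  set Gab := (a^(p/2) - b^(p/2))^2 with hGab
  set Gmb := (a^(p/2) + b^(p/2))^2 with hGmb
  set Mab := (a+b)^(p-2) * (a-b)^2 with hMab
  set Mmb := (a+b)^p with hMmb
  have hMab0 : 0 ≤ Mab :=
    mul_nonneg (Real.rpow_nonneg (show (0:ℝ) ≤ a+b by linarith) (p-2)) (sq_nonneg _)
  have hMmb0 : 0 ≤ Mmb := Real.rpow_nonneg (by linarith) p
  have hFab0 : 0 ≤ Fab := le_trans (mul_nonneg (inv_nonneg.2 hκA0.le) hMab0) Al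
  have hFmb0 : 0 ≤ Fmb := le_trans (mul_nonneg (inv_nonneg.2 hκC10.le) hMmb0) C1l
  have hGab0 : 0 ≤ Gab := sq_nonneg _
  have hGmb0 : 0 ≤ Gmb := sq_nonneg _
  -- derived endpoint bounds with constant κ² =: c
  have hMabF : Mab ≤ κ2 * Fab := bump (uninv hκA0 Al) hFab0 hAκ2
  have hMmbF : Mmb ≤ κ2 * Fmb := bump (uninv hκC10 C1l) hFmb0 hC1κ2
  have hFabM : Fab ≤ κ2 * Mab := bump Au hMab0 hAκ2
  have hFmbM : Fmb ≤ κ2 * Mmb := bump C1u hMmb0 hC1κ2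
  have hFabG : Fab ≤ κ2 * Gab := by
    have h2 : Mab ≤ κB * Gab := uninv hκB0 Bl
    exact bump (chain Au h2 hGab0 hκA0.le) hGab0 hABκ2
  have hFmbG : Fmb ≤ κ2 * Gmb := by
    have h2 : Mmb ≤ κC2 * Gmb := uninv hκC20 C2l
    exact bump (chain C1u h2 hGmb0 hκC10.le) hGmb0 hCCκ2
  have hGabF : Gab ≤ κ2 * Fab := by
    have h2 : Mab ≤ κA * Fab := uninv hκA0 Al
    have h3 := chain Bu h2 hFab0 hκB0.le
    rw [mul_comm κB κA] at h3
    exact bump h3 hFab0 hABκ2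
  have hGmbF : Gmb ≤ κ2 * Fmb := by
    have h2 : Mmb ≤ κC1 * Fmb := uninv hκC10 C1l
    have h3 := chain C2u h2 hFmb0 hκC20.le
    rw [mul_comm κC2 κC1] at h3
    exact bump h3 hFmb0 hCCκ2
  -- endpoint algebraic identities
  have ea1 : a^(p-2) * a = a^(p-1) := by
    rw [hmul ha (by rw [show p-2+1 = p-1 by ring]; exact hp1.ne'), show p-2+1 = p-1 by ring]
  have eb1 : b^(p-2) * b = b^(p-1) := by
    rw [hmul hb (by rw [show p-2+1 = p-1 by ring]; exact hp1.ne'), show p-2+1 = p-1 by ring]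
  have ea2 : a^(p-1) * a = a^p := by
    rw [hmul ha (by rw [show p-1+1 = p by ring]; positivity), show p-1+1 = p by ring]
  have eb2 : b^(p-1) * b = b^p := by
    rw [hmul hb (by rw [show p-1+1 = p by ring]; positivity), show p-1+1 = p by ring]
  have ec1 : a^((p-2)/2) * a = a^(p/2) := by
    rw [hmul ha (by rw [show (p-2)/2+1 = p/2 by ring]; exact hp2.ne'),
      show (p-2)/2+1 = p/2 by ring]
  have ed1 : b^((p-2)/2) * b = b^(p/2) := by
    rw [hmul hb (by rw [show (p-2)/2+1 = p/2 by ring]; exact hp2.ne'),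
      show (p-2)/2+1 = p/2 by ring]
  have ec2 : (a^(p/2))^2 = a^p := by rw [sq_rpow ha, show 2*(p/2) = p by ring]
  have ed2 : (b^(p/2))^2 = b^p := by rw [sq_rpow hb, show 2*(p/2) = p by ring]
  have ew1 : (a+b)^(p-2) * (a+b) = (a+b)^(p-1) := by
    rw [hmul (show (0:ℝ) ≤ a+b by linarith) (by rw [show p-2+1 = p-1 by ring]; exact hp1.ne'),
      show p-2+1 = p-1 by ring]
  have ew2 : (a+b)^(p-1) * (a+b) = (a+b)^p := by
    rw [hmul (show (0:ℝ) ≤ a+b by linarith) (by rw [show p-1+1 = p by ring]; positivity),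
      show p-1+1 = p by ring]
  have eF1 : a^p + b^p - (a^(p-2)+b^(p-2))*(a*b) = Fab := by
    rw [hFab]; linear_combination (-b) * ea1 + (-a) * eb1 - ea2 - eb2
  have eF2 : a^p + b^p + (a^(p-2)+b^(p-2))*(a*b) = Fmb := by
    rw [hFmb]; linear_combination b * ea1 + a * eb1 - ea2 - eb2
  have eG1 : a^p + b^p - 2*(a^((p-2)/2)*b^((p-2)/2))*(a*b) = Gab := by
    rw [hGab]
    linear_combination (-ec2) - ed2 - (2*(b^((p-2)/2)*b)) * ec1 - (2*a^(p/2)) * ed1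
  have eG2 : a^p + b^p + 2*(a^((p-2)/2)*b^((p-2)/2))*(a*b) = Gmb := by
    rw [hGmb]
    linear_combination (-ec2) - ed2 + (2*(b^((p-2)/2)*b)) * ec1 + (2*a^(p/2)) * ed1
  have eM1 : (a+b)^(p-2)*(a^2+b^2-2*(a*b)) = Mab := by rw [hMab]; ring
  have eM2 : (a+b)^(p-2)*(a^2+b^2+2*(a*b)) = Mmb := by
    rw [hMmb]; linear_combination (a+b) * ew1 + ew2
  refine ⟨?_, ?_, ?_, ?_⟩
  · -- c⁻¹ G ≤ F
    rw [inv_mul_le_iff₀ hc0]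
    have h1 : ((1-κ2)*(a^p+b^p)) + (κ2*(a^(p-2)+b^(p-2)) - 2*(a^((p-2)/2)*b^((p-2)/2)))*(a*b) ≤ 0 := by
      have e : ((1-κ2)*(a^p+b^p)) + (κ2*(a^(p-2)+b^(p-2)) - 2*(a^((p-2)/2)*b^((p-2)/2)))*(a*b) = (a^p + b^p - 2*(a^((p-2)/2)*b^((p-2)/2))*(a*b)) - κ2 * (a^p + b^p - (a^(p-2)+b^(p-2))*(a*b)) := by ring
      rw [e, eG1, eF1]
      linarith [hGabF]
    have h2 : ((1-κ2)*(a^p+b^p)) - (κ2*(a^(p-2)+b^(p-2)) - 2*(a^((p-2)/2)*b^((p-2)/2)))*(a*b) ≤ 0 := by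
      have e : ((1-κ2)*(a^p+b^p)) - (κ2*(a^(p-2)+b^(p-2)) - 2*(a^((p-2)/2)*b^((p-2)/2)))*(a*b) = (a^p + b^p + 2*(a^((p-2)/2)*b^((p-2)/2))*(a*b)) - κ2 * (a^p + b^p + (a^(p-2)+b^(p-2))*(a*b)) := by ring
      rw [e, eG2, eF2]
      linarith [hGmbF]
    have h3 := interp ht h1 h2
    have e3 : ((1-κ2)*(a^p+b^p)) + (κ2*(a^(p-2)+b^(p-2)) - 2*(a^((p-2)/2)*b^((p-2)/2)))*t = (a^p + b^p - 2*(a^((p-2)/2)*b^((p-2)/2))*t) - κ2 * (a^p + b^p - (a^(p-2)+b^(p-2))*t) := by ring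
    linarith [h3, e3]
  · -- F ≤ c G
    have h1 : ((1-κ2)*(a^p+b^p)) + (2*κ2*(a^((p-2)/2)*b^((p-2)/2)) - (a^(p-2)+b^(p-2)))*(a*b) ≤ 0 := by
      have e : ((1-κ2)*(a^p+b^p)) + (2*κ2*(a^((p-2)/2)*b^((p-2)/2)) - (a^(p-2)+b^(p-2)))*(a*b) = (a^p + b^p - (a^(p-2)+b^(p-2))*(a*b)) - κ2 * (a^p + b^p - 2*(a^((p-2)/2)*b^((p-2)/2))*(a*b)) := by ring
      rw [e, eF1, eG1]
      linarith [hFabG]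
    have h2 : ((1-κ2)*(a^p+b^p)) - (2*κ2*(a^((p-2)/2)*b^((p-2)/2)) - (a^(p-2)+b^(p-2)))*(a*b) ≤ 0 := by
      have e : ((1-κ2)*(a^p+b^p)) - (2*κ2*(a^((p-2)/2)*b^((p-2)/2)) - (a^(p-2)+b^(p-2)))*(a*b) = (a^p + b^p + (a^(p-2)+b^(p-2))*(a*b)) - κ2 * (a^p + b^p + 2*(a^((p-2)/2)*b^((p-2)/2))*(a*b)) := by ring
      rw [e, eF2, eG2]
      linarith [hFmbG]
    have h3 := interp ht h1 h2
    have e3 : ((1-κ2)*(a^p+b^p)) + (2*κ2*(a^((p-2)/2)*b^((p-2)/2)) - (a^(p-2)+b^(p-2)))*t = (a^p + b^p - (a^(p-2)+b^(p-2))*t) - κ2 * (a^p + b^p - 2*(a^((p-2)/2)*b^((p-2)/2))*t) := by ring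
    linarith [h3, e3]
  · -- c⁻¹ M ≤ F
    rw [inv_mul_le_iff₀ hc0]
    have h1 : ((a+b)^(p-2)*(a^2+b^2) - κ2*(a^p+b^p)) + (κ2*(a^(p-2)+b^(p-2)) - 2*(a+b)^(p-2))*(a*b) ≤ 0 := by
      have e : ((a+b)^(p-2)*(a^2+b^2) - κ2*(a^p+b^p)) + (κ2*(a^(p-2)+b^(p-2)) - 2*(a+b)^(p-2))*(a*b) = ((a+b)^(p-2)*(a^2+b^2-2*(a*b))) - κ2 * (a^p + b^p - (a^(p-2)+b^(p-2))*(a*b)) := by ring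
      rw [e, eM1, eF1]
      linarith [hMabF]
    have h2 : ((a+b)^(p-2)*(a^2+b^2) - κ2*(a^p+b^p)) - (κ2*(a^(p-2)+b^(p-2)) - 2*(a+b)^(p-2))*(a*b) ≤ 0 := by
      have e : ((a+b)^(p-2)*(a^2+b^2) - κ2*(a^p+b^p)) - (κ2*(a^(p-2)+b^(p-2)) - 2*(a+b)^(p-2))*(a*b) = ((a+b)^(p-2)*(a^2+b^2+2*(a*b))) - κ2 * (a^p + b^p + (a^(p-2)+b^(p-2))*(a*b)) := by ring
      rw [e, eM2, eF2]
      linarith [hMmbF]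
    have h3 := interp ht h1 h2
    have e3 : ((a+b)^(p-2)*(a^2+b^2) - κ2*(a^p+b^p)) + (κ2*(a^(p-2)+b^(p-2)) - 2*(a+b)^(p-2))*t = ((a+b)^(p-2)*(a^2+b^2-2*t)) - κ2 * (a^p + b^p - (a^(p-2)+b^(p-2))*t) := by ring
    linarith [h3, e3]
  · -- F ≤ c M
    have h1 : (a^p+b^p - κ2*((a+b)^(p-2)*(a^2+b^2))) + (2*κ2*(a+b)^(p-2) - (a^(p-2)+b^(p-2)))*(a*b) ≤ 0 := by
      have e : (a^p+b^p - κ2*((a+b)^(p-2)*(a^2+b^2))) + (2*κ2*(a+b)^(p-2) - (a^(p-2)+b^(p-2)))*(a*b) = (a^p + b^p - (a^(p-2)+b^(p-2))*(a*b)) - κ2 * ((a+b)^(p-2)*(a^2+b^2-2*(a*b))) := by ring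
      rw [e, eF1, eM1]
      linarith [hFabM]
    have h2 : (a^p+b^p - κ2*((a+b)^(p-2)*(a^2+b^2))) - (2*κ2*(a+b)^(p-2) - (a^(p-2)+b^(p-2)))*(a*b) ≤ 0 := by
      have e : (a^p+b^p - κ2*((a+b)^(p-2)*(a^2+b^2))) - (2*κ2*(a+b)^(p-2) - (a^(p-2)+b^(p-2)))*(a*b) = (a^p + b^p + (a^(p-2)+b^(p-2))*(a*b)) - κ2 * ((a+b)^(p-2)*(a^2+b^2+2*(a*b))) := by ring
      rw [e, eF2, eM2]
      linarith [hFmbM]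
    have h3 := interp ht h1 h2
    have e3 : (a^p+b^p - κ2*((a+b)^(p-2)*(a^2+b^2))) + (2*κ2*(a+b)^(p-2) - (a^(p-2)+b^(p-2)))*t = (a^p + b^p - (a^(p-2)+b^(p-2))*t) - κ2 * ((a+b)^(p-2)*(a^2+b^2-2*t)) := by ring
    linarith [h3, e3]

lemma core {p : ℝ} (hp : 1 < p) :
    ∃ c : ℝ, 1 ≤ c ∧ ∀ a b t : ℝ, 0 ≤ a → 0 ≤ b → |t| ≤ a*b →
      (c⁻¹ * (a^p + b^p - 2*(a^((p-2)/2) * b^((p-2)/2))*t) ≤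
          a^p + b^p - (a^(p-2) + b^(p-2))*t) ∧
      (a^p + b^p - (a^(p-2)+b^(p-2))*t ≤ c * (a^p + b^p - 2*(a^((p-2)/2)*b^((p-2)/2))*t)) ∧
      (c⁻¹ * ((a+b)^(p-2)*(a^2+b^2-2*t)) ≤ a^p + b^p - (a^(p-2)+b^(p-2))*t) ∧
      (a^p + b^p - (a^(p-2)+b^(p-2))*t ≤ c * ((a+b)^(p-2)*(a^2+b^2-2*t))) := by
  have hp1 : 0 < p - 1 := by linarith
  have hp2 : 0 < p/2 := by linarith
  have hA1 : 1 ≤ kap (p-1) := kap_ge_one hp1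
  have hB1 : 1 ≤ kap (p/2)^2 := by nlinarith [kap_ge_one hp2]
  have hC11 : (1:ℝ) ≤ max 2 ((2:ℝ) ^ (p-1)) := le_trans (by norm_num) (le_max_left _ _)
  have hC21 : (1:ℝ) ≤ max 4 ((2:ℝ) ^ p) := le_trans (by norm_num) (le_max_left _ _)
  refine ⟨(kap (p-1) * kap (p/2)^2 * max 2 ((2:ℝ) ^ (p-1)) * max 4 ((2:ℝ) ^ p))^2,
    (prod4_bounds hA1 hB1 hC11 hC21).1, ?_⟩
  intro a b t ha hb ht
  exact core_aux hp hA1 hB1 hC11 hC21 ha hb ht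
    (corA hp ha hb).1 (corA hp ha hb).2 (corB hp ha hb).1 (corB hp ha hb).2
    (corC1 hp ha hb).1 (corC1 hp ha hb).2 (corC2 hp ha hb).1 (corC2 hp ha hb).2


lemma hmul2 {x : ℝ} (hx : 0 ≤ x) {y : ℝ} (hy1 : y + 1 ≠ 0) (hy2 : y + 2 ≠ 0) :
    x ^ y * x ^ 2 = x ^ (y+2) := by
  have h1 : x ^ y * x = x ^ (y+1) := hmul hx hy1
  have h2 : x ^ (y+1) * x = x ^ (y+1+1) := hmul hx (by rw [show y+1+1 = y+2 by ring]; exact hy2)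
  calc x ^ y * x ^ 2 = (x ^ y * x) * x := by ring
    _ = x ^ (y+1) * x := by rw [h1]
    _ = x ^ (y+2) := by rw [h2, show y+1+1 = y+2 by ring]

lemma phi_low {p a t : ℝ} (ht0 : 0 ≤ t) (hta : t ≤ a) :
    (∫ s in (0:ℝ)..t, max a s ^ (p-2) * s) = a ^ (p-2) * t ^ 2 / 2 := by
  have heq : Set.EqOn (fun s : ℝ => max a s ^ (p-2) * s) (fun s : ℝ => a ^ (p-2) * s)
      (Set.uIcc 0 t) := by
    intro s hs
    rw [Set.uIcc_of_le ht0] at hs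
    have : max a s = a := max_eq_left (le_trans hs.2 hta)
    simp only [this]
  rw [intervalIntegral.integral_congr heq, intervalIntegral.integral_const_mul, integral_id]
  ring

lemma phi_high {p a t : ℝ} (hp : 1 < p) (ha : 0 ≤ a) (hat : a ≤ t) :
    (∫ s in (0:ℝ)..t, max a s ^ (p-2) * s) = a ^ (p-2) * a ^ 2 / 2 + (t ^ p - a ^ p) / p := by
  have hp1 : (0:ℝ) < p - 1 := by linarith
  have heq2 : Set.EqOn (fun s : ℝ => max a s ^ (p-2) * s) (fun s : ℝ => s ^ (p-1))
      (Set.uIcc a t) := by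
    intro s hs
    rw [Set.uIcc_of_le hat] at hs
    have hs0 : 0 ≤ s := le_trans ha hs.1
    have hm : max a s = s := max_eq_right hs.1
    simp only [hm]
    rw [hmul hs0 (by rw [show p-2+1 = p-1 by ring]; exact hp1.ne'), show p-2+1 = p-1 by ring]
  have h1 : IntervalIntegrable (fun s : ℝ => max a s ^ (p-2) * s) MeasureTheory.volume 0 a := by
    apply ContinuousOn.intervalIntegrable
    apply ContinuousOn.congr (f := fun s : ℝ => a ^ (p-2) * s)
    · exact (continuous_const.mul continuous_id).continuousOn
    · intro s hs
      rw [Set.uIcc_of_le ha] at hs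
      have : max a s = a := max_eq_left hs.2
      simp only [this]
  have h2 : IntervalIntegrable (fun s : ℝ => max a s ^ (p-2) * s) MeasureTheory.volume a t := by
    apply ContinuousOn.intervalIntegrable
    apply ContinuousOn.congr (f := fun s : ℝ => s ^ (p-1))
    · exact (Real.continuous_rpow_const hp1.le).continuousOn
    · exact heq2
  rw [← intervalIntegral.integral_add_adjacent_intervals h1 h2]
  have e1 : (∫ s in (0:ℝ)..a, max a s ^ (p-2) * s) = a ^ (p-2) * a ^ 2 / 2 :=
    phi_low ha le_rfl
  have e2 : (∫ s in a..t, max a s ^ (p-2) * s) = (t ^ p - a ^ p) / p := by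
    rw [intervalIntegral.integral_congr heq2, integral_rpow (Or.inl (by linarith))]
    rw [show p - 1 + 1 = p by ring]
  rw [e1, e2]


set_option maxHeartbeats 1000000 in
lemma phi_comp {p : ℝ} (hp : 1 < p) :
    ∃ c : ℝ, 1 ≤ c ∧ ∀ a t : ℝ, 0 ≤ a → 0 ≤ t →
      c⁻¹ * ((a+t) ^ (p-2) * t^2) ≤ (∫ s in (0:ℝ)..t, max a s ^ (p-2) * s) ∧
      (∫ s in (0:ℝ)..t, max a s ^ (p-2) * s) ≤ c * ((a+t) ^ (p-2) * t^2) := by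
  have hp0 : (0:ℝ) < p := by linarith
  set R := (2:ℝ) ^ |p-2| with hRdef
  have hR1 : 1 ≤ R := by
    calc (1:ℝ) = 2 ^ (0:ℝ) := by norm_num
      _ ≤ R := Real.rpow_le_rpow_of_exponent_le (by norm_num) (abs_nonneg _)
  have hR0 : (0:ℝ) ≤ R := by linarith
  set c2 := max 2 p with hc2def
  have hc22 : (2:ℝ) ≤ c2 := le_max_left _ _
  have hc2p : p ≤ c2 := le_max_right _ _
  have hc20 : (0:ℝ) < c2 := by linarith
  have hc0 : (0:ℝ) < R * c2 * 2 := by nlinarith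
  clear_value R c2
  refine ⟨R * c2 * 2, by nlinarith, ?_⟩
  intro a t ha ht
  have hat0 : (0:ℝ) ≤ a + t := by linarith
  have hv0 : (0:ℝ) ≤ (a+t) ^ (p-2) * t^2 :=
    mul_nonneg (Real.rpow_nonneg hat0 _) (sq_nonneg t)
  rcases le_total t a with hta | hat
  · rw [phi_low ht hta]
    have hu0 : (0:ℝ) ≤ a ^ (p-2) * t^2 :=
      mul_nonneg (Real.rpow_nonneg ha _) (sq_nonneg t)
    have r1 : a ^ (p-2) ≤ R * (a+t) ^ (p-2) := by
      rw [hRdef]; exact ratio (p-2) (y := a+t) ha (by linarith) (by linarith)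
    have r2 : (a+t) ^ (p-2) ≤ R * a ^ (p-2) := by
      rw [hRdef]; exact ratio (p-2) (y := a) hat0 (by linarith) (by linarith)
    have r1t : a ^ (p-2) * t^2 ≤ R * ((a+t) ^ (p-2) * t^2) := by
      have := mul_le_mul_of_nonneg_right r1 (sq_nonneg t); nlinarith
    have r2t : (a+t) ^ (p-2) * t^2 ≤ R * (a ^ (p-2) * t^2) := by
      have := mul_le_mul_of_nonneg_right r2 (sq_nonneg t); nlinarith
    constructor
    · rw [inv_mul_le_iff₀ hc0]
      have h4 : R * (a ^ (p-2) * t^2) ≤ (R * (a ^ (p-2) * t^2)) * c2 :=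
        le_mul_of_one_le_right (by positivity) (by linarith)
      have e : (R * c2 * 2) * (a ^ (p-2) * t^2 / 2) = (R * (a ^ (p-2) * t^2)) * c2 := by ring
      linarith
    · have h4 : R * ((a+t) ^ (p-2) * t^2) ≤ (R * ((a+t) ^ (p-2) * t^2)) * (c2 * 2) :=
        le_mul_of_one_le_right (by positivity) (by linarith)
      have e : (R * c2 * 2) * ((a+t) ^ (p-2) * t^2) = (R * ((a+t) ^ (p-2) * t^2)) * (c2*2) := by
        ring
      linarith
  · rw [phi_high hp ha hat]
    have ea : a ^ (p-2) * a ^ 2 = a ^ p := by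
      rw [hmul2 ha (by rw [show p-2+1 = p-1 by ring]; exact (show (0:ℝ) < p-1 by linarith).ne')
        (by rw [show p-2+2 = p by ring]; exact hp0.ne'), show p-2+2 = p by ring]
    have et : t ^ (p-2) * t ^ 2 = t ^ p := by
      rw [hmul2 ht (by rw [show p-2+1 = p-1 by ring]; exact (show (0:ℝ) < p-1 by linarith).ne')
        (by rw [show p-2+2 = p by ring]; exact hp0.ne'), show p-2+2 = p by ring]
    rw [ea]
    have hS0 : (0:ℝ) ≤ a ^ p := Real.rpow_nonneg ha p
    have hT0 : (0:ℝ) ≤ t ^ p := Real.rpow_nonneg ht p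
    have hST : a ^ p ≤ t ^ p := Real.rpow_le_rpow ha hat hp0.le
    have hTS0 : (0:ℝ) ≤ t ^ p - a ^ p := by linarith
    have hφ0 : (0:ℝ) ≤ a ^ p / 2 + (t ^ p - a ^ p)/p := by
      have := div_nonneg hTS0 hp0.le; linarith
    have r1 : t ^ (p-2) ≤ R * (a+t) ^ (p-2) := by
      rw [hRdef]; exact ratio (p-2) (y := a+t) ht (by linarith) (by linarith)
    have r2 : (a+t) ^ (p-2) ≤ R * t ^ (p-2) := by
      rw [hRdef]; exact ratio (p-2) (y := t) hat0 (by linarith) (by linarith)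
    have r1t : t ^ p ≤ R * ((a+t) ^ (p-2) * t^2) := by
      have := mul_le_mul_of_nonneg_right r1 (sq_nonneg t)
      nlinarith [et]
    have r2t : (a+t) ^ (p-2) * t^2 ≤ R * t ^ p := by
      have := mul_le_mul_of_nonneg_right r2 (sq_nonneg t)
      nlinarith [et]
    have hφu : a ^ p / 2 + (t ^ p - a ^ p)/p ≤ (3/2) * t ^ p := by
      have h1 : (t ^ p - a ^ p)/p ≤ t ^ p - a ^ p := div_le_self hTS0 hp.le
      linarith
    have hφl : t ^ p ≤ c2 * (a ^ p / 2 + (t ^ p - a ^ p)/p) := by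
      rcases le_total p 2 with h | h
      · have h1 : (t ^ p - a ^ p)/2 ≤ (t ^ p - a ^ p)/p :=
          div_le_div_of_nonneg_left hTS0 hp0 h
        have h2 : t ^ p ≤ 2 * (a ^ p / 2 + (t ^ p - a ^ p)/p) := by linarith
        linarith [h2, mul_le_mul_of_nonneg_right hc22 hφ0]
      · have e : p * (a ^ p / 2 + (t ^ p - a ^ p)/p) = p * a ^ p / 2 + (t ^ p - a ^ p) := by
          field_simp
        have h2 : t ^ p ≤ p * (a ^ p / 2 + (t ^ p - a ^ p)/p) := by
          nlinarith [e, mul_nonneg hS0 (show (0:ℝ) ≤ p - 2 by linarith)]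
        linarith [h2, mul_le_mul_of_nonneg_right hc2p hφ0]
    constructor
    · rw [inv_mul_le_iff₀ hc0]
      have h5 : R * t ^ p ≤ R * (c2 * (a ^ p / 2 + (t ^ p - a ^ p)/p)) :=
        mul_le_mul_of_nonneg_left hφl hR0
      have e : (R * c2 * 2) * (a ^ p / 2 + (t ^ p - a ^ p)/p) =
          2 * (R * (c2 * (a ^ p / 2 + (t ^ p - a ^ p)/p))) := by ring
      have h6 : (0:ℝ) ≤ R * (c2 * (a ^ p / 2 + (t ^ p - a ^ p)/p)) := by positivity
      linarith
    · have h7 : (3/2) * t ^ p ≤ (3/2) * (R * ((a+t) ^ (p-2) * t^2)) := by linarith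
      have hRv0 : (0:ℝ) ≤ R * ((a+t) ^ (p-2) * t^2) := mul_nonneg hR0 hv0
      have e8 : (R * c2 * 2) * ((a+t) ^ (p-2) * t^2) =
          2 * (c2 * (R * ((a+t) ^ (p-2) * t^2))) := by ring
      have h8 : (3/2) * (R * ((a+t) ^ (p-2) * t^2)) ≤ (R * c2 * 2) * ((a+t) ^ (p-2) * t^2) := by
        have h9 := mul_le_mul_of_nonneg_right hc22 hRv0
        have h10 : (0:ℝ) ≤ c2 * (R * ((a+t) ^ (p-2) * t^2)) := mul_nonneg hc20.le hRv0
        linarith [e8, h9, h10]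
      linarith

end S10


set_option maxHeartbeats 2000000 in
/-- For each `p ∈ (1, ∞)` there is a constant `c ≥ 1` depending only on
`p` such that for all `P, Q ∈ ℝⁿ`:
`c⁻¹ |V(P) - V(Q)|² ≤ (A(P) - A(Q)) · (P - Q) ≤ c |V(P) - V(Q)|²` and
`c⁻¹ φ_{|Q|}(|P - Q|) ≤ (A(P) - A(Q)) · (P - Q) ≤ c φ_{|Q|}(|P - Q|)`. -/
theorem stmt10 (p : ℝ) (hp : 1 < p) :
    ∃ c : ℝ, 1 ≤ c ∧
      ∀ (n : ℕ) (P Q : EuclideanSpace ℝ (Fin n)),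
        c⁻¹ * ‖Vop p P - Vop p Q‖ ^ 2 ≤ inner ℝ (Aop p P - Aop p Q) (P - Q) ∧
        (inner ℝ (Aop p P - Aop p Q) (P - Q) : ℝ) ≤ c * ‖Vop p P - Vop p Q‖ ^ 2 ∧
        c⁻¹ * phiShift p ‖Q‖ ‖P - Q‖ ≤ inner ℝ (Aop p P - Aop p Q) (P - Q) ∧
        (inner ℝ (Aop p P - Aop p Q) (P - Q) : ℝ) ≤ c * phiShift p ‖Q‖ ‖P - Q‖ := by
  have hp0 : (0:ℝ) < p := by linarith
  have hp1 : (0:ℝ) < p - 1 := by linarith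
  obtain ⟨c1, hc11, hcore⟩ := S10.core hp
  obtain ⟨c2, hc21, hphi⟩ := S10.phi_comp hp
  set R := (2:ℝ) ^ |p-2| with hRdef
  have hR1 : 1 ≤ R := by
    calc (1:ℝ) = 2 ^ (0:ℝ) := by norm_num
      _ ≤ R := Real.rpow_le_rpow_of_exponent_le (by norm_num) (abs_nonneg _)
  clear_value R
  have hc10 : (0:ℝ) < c1 := by linarith
  have hc20 : (0:ℝ) < c2 := by linarith
  have hR0 : (0:ℝ) < R := by linarith
  have h12 : 1 ≤ c1*c2 := by nlinarith
  have hcc : 1 ≤ c1*c2*R := by nlinarith [mul_le_mul_of_nonneg_left hR1 (show (0:ℝ) ≤ c1*c2 by linarith)]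
  have hc0 : (0:ℝ) < c1*c2*R := by linarith
  have h2R : 1 ≤ c2*R := by nlinarith
  have hc1c : c1 ≤ c1*c2*R := by nlinarith [mul_le_mul_of_nonneg_left h2R hc10.le]
  refine ⟨c1*c2*R, hcc, ?_⟩
  intro n P Q
  have ha : (0:ℝ) ≤ ‖P‖ := norm_nonneg P
  have hb : (0:ℝ) ≤ ‖Q‖ := norm_nonneg Q
  have hd0 : (0:ℝ) ≤ ‖P - Q‖ := norm_nonneg _
  have habt : |(inner ℝ P Q : ℝ)| ≤ ‖P‖ * ‖Q‖ := abs_real_inner_le_norm P Q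
  have hd2 : ‖P - Q‖^2 = ‖P‖^2 + ‖Q‖^2 - 2*(inner ℝ P Q : ℝ) := by
    rw [norm_sub_sq_real]; ring
  -- key scalar conversions
  have eA : ‖P‖^(p-2) * ‖P‖^2 = ‖P‖^p := by
    rw [S10.hmul2 ha (by rw [show p-2+1 = p-1 by ring]; exact hp1.ne')
      (by rw [show p-2+2 = p by ring]; exact hp0.ne'), show p-2+2 = p by ring]
  have eB : ‖Q‖^(p-2) * ‖Q‖^2 = ‖Q‖^p := by
    rw [S10.hmul2 hb (by rw [show p-2+1 = p-1 by ring]; exact hp1.ne')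
      (by rw [show p-2+2 = p by ring]; exact hp0.ne'), show p-2+2 = p by ring]
  have eVa : (‖P‖^((p-2)/2) * ‖P‖)^2 = ‖P‖^p := by
    rw [mul_pow, S10.sq_rpow ha ((p-2)/2), show 2*((p-2)/2) = p-2 by ring, eA]
  have eVb : (‖Q‖^((p-2)/2) * ‖Q‖)^2 = ‖Q‖^p := by
    rw [mul_pow, S10.sq_rpow hb ((p-2)/2), show 2*((p-2)/2) = p-2 by ring, eB]
  -- vector identities
  have EA : (inner ℝ (Aop p P - Aop p Q) (P - Q) : ℝ)
      = ‖P‖^p + ‖Q‖^p - (‖P‖^(p-2) + ‖Q‖^(p-2))*(inner ℝ P Q : ℝ) := by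
    simp only [Aop, inner_sub_left, inner_sub_right, real_inner_smul_left]
    rw [real_inner_self_eq_norm_sq, real_inner_self_eq_norm_sq, real_inner_comm Q P]
    linear_combination eA + eB
  have EV : ‖Vop p P - Vop p Q‖^2
      = ‖P‖^p + ‖Q‖^p - 2*(‖P‖^((p-2)/2) * ‖Q‖^((p-2)/2))*(inner ℝ P Q : ℝ) := by
    rw [norm_sub_sq_real]
    simp only [Vop, real_inner_smul_left, real_inner_smul_right, norm_smul,
      Real.norm_eq_abs]
    rw [abs_of_nonneg (Real.rpow_nonneg ha _), abs_of_nonneg (Real.rpow_nonneg hb _)]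
    linear_combination eVa + eVb
  have EPhi : phiShift p ‖Q‖ ‖P - Q‖ =
      ∫ s in (0:ℝ)..‖P - Q‖, max ‖Q‖ s ^ (p-2) * s := rfl
  obtain ⟨k1, k2, k3, k4⟩ := hcore ‖P‖ ‖Q‖ (inner ℝ P Q : ℝ) ha hb habt
  obtain ⟨f1, f2⟩ := hphi ‖Q‖ ‖P - Q‖ hb hd0
  -- nonnegativity facts
  have hM0 : (0:ℝ) ≤ (‖P‖+‖Q‖)^(p-2)*(‖P‖^2+‖Q‖^2-2*(inner ℝ P Q : ℝ)) := by
    have h1 : (0:ℝ) ≤ (‖P‖+‖Q‖)^(p-2) := Real.rpow_nonneg (by linarith) _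
    have h2 : (0:ℝ) ≤ ‖P‖^2+‖Q‖^2-2*(inner ℝ P Q : ℝ) := by
      rw [← hd2]; exact sq_nonneg _
    exact mul_nonneg h1 h2
  have hF0 : (0:ℝ) ≤ ‖P‖^p + ‖Q‖^p - (‖P‖^(p-2) + ‖Q‖^(p-2))*(inner ℝ P Q : ℝ) :=
    le_trans (mul_nonneg (inv_nonneg.2 hc10.le) hM0) k3
  have hG0 : (0:ℝ) ≤ ‖P‖^p + ‖Q‖^p
      - 2*(‖P‖^((p-2)/2) * ‖Q‖^((p-2)/2))*(inner ℝ P Q : ℝ) := by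
    rw [← EV]; exact sq_nonneg _
  have hX0 : (0:ℝ) ≤ (‖Q‖+‖P - Q‖)^(p-2)*‖P - Q‖^2 :=
    mul_nonneg (Real.rpow_nonneg (by linarith) _) (sq_nonneg _)
  have hΦ0 : (0:ℝ) ≤ ∫ s in (0:ℝ)..‖P - Q‖, max ‖Q‖ s ^ (p-2) * s :=
    le_trans (mul_nonneg (inv_nonneg.2 hc20.le) hX0) f1
  -- triangle comparisons
  have htri1 : ‖P‖ ≤ ‖Q‖ + ‖P - Q‖ := by
    have := norm_sub_norm_le P Q; linarith
  have htri2 : ‖P - Q‖ ≤ ‖P‖ + ‖Q‖ := norm_sub_le P Q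
  have rat1 : (‖Q‖+‖P - Q‖)^(p-2) ≤ R * (‖P‖+‖Q‖)^(p-2) := by
    rw [hRdef]
    exact S10.ratio (p-2) (y := ‖P‖+‖Q‖) (by linarith) (by linarith) (by linarith)
  have rat2 : (‖P‖+‖Q‖)^(p-2) ≤ R * (‖Q‖+‖P - Q‖)^(p-2) := by
    rw [hRdef]
    exact S10.ratio (p-2) (y := ‖Q‖+‖P - Q‖) (by linarith) (by linarith) (by linarith)
  -- M in d² form
  have eM : (‖P‖+‖Q‖)^(p-2)*(‖P‖^2+‖Q‖^2-2*(inner ℝ P Q : ℝ))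
      = (‖P‖+‖Q‖)^(p-2)*‖P - Q‖^2 := by rw [hd2]
  refine ⟨?_, ?_, ?_, ?_⟩
  · rw [EV, EA, inv_mul_le_iff₀ hc0]
    exact S10.bump (S10.uninv hc10 k1) hF0 hc1c
  · rw [EV, EA]
    exact S10.bump k2 hG0 hc1c
  · rw [EA, EPhi, inv_mul_le_iff₀ hc0]
    -- Φ ≤ c * F
    have h2 : (‖Q‖+‖P - Q‖)^(p-2)*‖P - Q‖^2 ≤ R * ((‖P‖+‖Q‖)^(p-2)*‖P - Q‖^2) := by
      have h := mul_le_mul_of_nonneg_right rat1 (sq_nonneg (‖P - Q‖))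
      nlinarith [h]
    have h3 : (‖P‖+‖Q‖)^(p-2)*‖P - Q‖^2 ≤ c1 *
        (‖P‖^p + ‖Q‖^p - (‖P‖^(p-2) + ‖Q‖^(p-2))*(inner ℝ P Q : ℝ)) := by
      have := S10.uninv hc10 k3
      rw [eM] at this
      exact this
    have h4 := S10.chain h2 h3 hF0 hR0.le
    have h5 := S10.chain f2 h4 hF0 hc20.le
    calc (∫ s in (0:ℝ)..‖P - Q‖, max ‖Q‖ s ^ (p-2) * s)
        ≤ (c2*(R*c1)) * (‖P‖^p + ‖Q‖^p - (‖P‖^(p-2) + ‖Q‖^(p-2))*(inner ℝ P Q : ℝ)) := h5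
      _ = (c1*c2*R) * (‖P‖^p + ‖Q‖^p - (‖P‖^(p-2) + ‖Q‖^(p-2))*(inner ℝ P Q : ℝ)) := by ring
  · rw [EA, EPhi]
    -- F ≤ c * Φ
    have h2 : (‖P‖+‖Q‖)^(p-2)*‖P - Q‖^2 ≤ R * ((‖Q‖+‖P - Q‖)^(p-2)*‖P - Q‖^2) := by
      have h := mul_le_mul_of_nonneg_right rat2 (sq_nonneg (‖P - Q‖))
      nlinarith [h]
    have h3 : (‖P‖^p + ‖Q‖^p - (‖P‖^(p-2) + ‖Q‖^(p-2))*(inner ℝ P Q : ℝ)) ≤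
        c1 * ((‖P‖+‖Q‖)^(p-2)*‖P - Q‖^2) := by rw [← eM]; exact k4
    have h4 := S10.chain h2 (S10.uninv hc20 f1) hΦ0 hR0.le
    have h5 := S10.chain h3 h4 hΦ0 hc10.le
    calc (‖P‖^p + ‖Q‖^p - (‖P‖^(p-2) + ‖Q‖^(p-2))*(inner ℝ P Q : ℝ))
        ≤ (c1*(R*c2)) * (∫ s in (0:ℝ)..‖P - Q‖, max ‖Q‖ s ^ (p-2) * s) := h5
      _ = (c1*c2*R) * (∫ s in (0:ℝ)..‖P - Q‖, max ‖Q‖ s ^ (p-2) * s) := by ring
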